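/- Every recursively partitionable graph is 1/3-tough: for every vertex subset S of an RP graph G with c(G−S) ≥ 2, one has |S| ≥ c(G−S)/3. -/
import Mathlib


open Finset

/-- `G.IsRP A` : the subgraph of `G` induced by the vertex set `A` is recursively
partitionable (RP): either `|A| = 1`, or `G[A]` is connected and for every integer partition
`a₁, …, a_k` (with `k ≥ 2`) of `|A|` there is a partition of `A` into parts of exactly these
sizes, each of which again induces an RP subgraph.  (The guard `B.card < A.card` is
automatically satisfied by every part of such a partition; it is only needed for
well-foundedness of the recursion.) -/
def SimpleGraph.IsRP {V : Type} [DecidableEq V] (G : SimpleGraph V) (A : Finset V) : Prop :=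
  A.card = 1 ∨ ((G.induce (A : Set V)).Connected ∧
    ∀ l : List ℕ, (∀ a ∈ l, 0 < a) → 2 ≤ l.length → l.sum = A.card →
      ∃ P : List (Finset V), P.map Finset.card = l ∧ P.Pairwise _root_.Disjoint ∧
        P.foldr (· ∪ ·) ∅ = A ∧ ∀ B ∈ P, ∀ _ : B.card < A.card, G.IsRP B)
termination_by A.card

namespace RPaux
set_option linter.unusedSectionVars false
set_option maxHeartbeats 1000000

variable {V : Type} [Fintype V] [DecidableEq V] (G : SimpleGraph V)

noncomputable def ncomp (W : Finset V) : ℕ :=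
  Nat.card (G.induce (W : Set V)).ConnectedComponent

def cmk (W : Finset V) (v : V) (h : v ∈ W) : (G.induce (W : Set V)).ConnectedComponent :=
  (G.induce (W : Set V)).connectedComponentMk ⟨v, h⟩

open Classical in
noncomputable def compFin (W : Finset V)
    (K : (G.induce (W : Set V)).ConnectedComponent) : Finset V :=
  W.filter fun v => ∃ h : v ∈ W, cmk G W v h = K

lemma mem_compFin {W : Finset V} {K} {v : V} :
    v ∈ compFin G W K ↔ ∃ h : v ∈ W, cmk G W v h = K := by
  classical
  simp only [compFin, mem_filter]
  exact ⟨fun ⟨_, h⟩ => h, fun ⟨h, hk⟩ => ⟨h, h, hk⟩⟩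

lemma compFin_subset {W : Finset V} {K} : compFin G W K ⊆ W := by
  intro v hv; rcases (mem_compFin G).1 hv with ⟨h, _⟩; exact h

lemma compFin_eq_of_mem {W : Finset V} {K J} {v : V}
    (hK : v ∈ compFin G W K) (hJ : v ∈ compFin G W J) : K = J := by
  rcases (mem_compFin G).1 hK with ⟨h1, e1⟩
  rcases (mem_compFin G).1 hJ with ⟨h2, e2⟩
  rw [← e1, ← e2]

lemma compFin_nonempty {W : Finset V} (K : (G.induce (W : Set V)).ConnectedComponent) :
    (compFin G W K).Nonempty := by
  obtain ⟨⟨v, hv⟩, rfl⟩ := K.exists_rep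
  exact ⟨v, (mem_compFin G).2 ⟨hv, rfl⟩⟩

lemma cmk_mono {X W : Finset V} (hXW : X ⊆ W) {u v : V} (hu : u ∈ X) (hv : v ∈ X)
    (h : cmk G X u hu = cmk G X v hv) : cmk G W u (hXW hu) = cmk G W v (hXW hv) := by
  have hr : (G.induce (X : Set V)).Reachable ⟨u, hu⟩ ⟨v, hv⟩ :=
    (SimpleGraph.ConnectedComponent.eq).1 h
  have hsub : (X : Set V) ⊆ (W : Set V) := by exact_mod_cast hXW
  have := hr.map (G.induceHomOfLE hsub).toHom
  exact (SimpleGraph.ConnectedComponent.eq).2 this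

instance finiteCC (W : Finset V) : Finite ((G.induce (W : Set V)).ConnectedComponent) :=
  Quot.finite _

lemma ncomp_union_le (X Y : Finset V) : ncomp G (X ∪ Y) ≤ ncomp G X + ncomp G Y := by
  classical
  set W := X ∪ Y with hW
  have hchoice : ∀ K : (G.induce (W : Set V)).ConnectedComponent,
      ∃ v, v ∈ compFin G W K := fun K => compFin_nonempty G K
  let rep : ∀ K : (G.induce (W : Set V)).ConnectedComponent, V := fun K => (hchoice K).choose
  have hrep : ∀ K, rep K ∈ compFin G W K := fun K => (hchoice K).choose_spec
  let f : (G.induce (W : Set V)).ConnectedComponent →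
      (G.induce (X : Set V)).ConnectedComponent ⊕ (G.induce (Y : Set V)).ConnectedComponent :=
    fun K => if h : rep K ∈ X then Sum.inl (cmk G X (rep K) h) else
      Sum.inr (cmk G Y (rep K) (by
        have := compFin_subset G (hrep K)
        rw [hW] at this
        rcases mem_union.1 this with h' | h'
        · exact absurd h' h
        · exact h'))
  have hXW : X ⊆ W := subset_union_left
  have hYW : Y ⊆ W := subset_union_right
  have hKrep : ∀ K, ∀ (h : rep K ∈ W), cmk G W (rep K) h = K := by
    intro K h
    rcases (mem_compFin G).1 (hrep K) with ⟨h', e⟩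
    exact e
  have hinj : Function.Injective f := by
    intro K1 K2 he
    by_cases h1 : rep K1 ∈ X <;> by_cases h2 : rep K2 ∈ X <;>
      simp only [f, dif_pos, dif_neg, h1, h2, dite_true, dite_false] at he
    · have := cmk_mono G hXW h1 h2 (Sum.inl.inj he)
      rw [hKrep K1 (hXW h1), hKrep K2 (hXW h2)] at this
      exact this
    · exact absurd he (by simp)
    · exact absurd he (by simp)
    · have hy1 : rep K1 ∈ Y := by
        have := compFin_subset G (hrep K1); rw [hW] at this
        rcases mem_union.1 this with h' | h'
        · exact absurd h' h1
        · exact h'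
      have hy2 : rep K2 ∈ Y := by
        have := compFin_subset G (hrep K2); rw [hW] at this
        rcases mem_union.1 this with h' | h'
        · exact absurd h' h2
        · exact h'
      have := cmk_mono G hYW hy1 hy2 (Sum.inr.inj he)
      rw [hKrep K1 (hYW hy1), hKrep K2 (hYW hy2)] at this
      exact this
  calc ncomp G W ≤ Nat.card ((G.induce (X : Set V)).ConnectedComponent ⊕
        (G.induce (Y : Set V)).ConnectedComponent) :=
        Nat.card_le_card_of_injective f hinj
    _ = ncomp G X + ncomp G Y := Nat.card_sum

lemma ncomp_le_of_meets {W Y : Finset V} (hYW : Y ⊆ W)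
    (hmeet : ∀ K : (G.induce (W : Set V)).ConnectedComponent,
      ∃ y, y ∈ Y ∧ y ∈ compFin G W K) : ncomp G W ≤ ncomp G Y := by
  classical
  let rep : ∀ _ : (G.induce (W : Set V)).ConnectedComponent, V := fun K => (hmeet K).choose
  have hrep : ∀ K, rep K ∈ Y ∧ rep K ∈ compFin G W K := fun K => (hmeet K).choose_spec
  let f : (G.induce (W : Set V)).ConnectedComponent →
      (G.induce (Y : Set V)).ConnectedComponent := fun K => cmk G Y (rep K) (hrep K).1
  have hinj : Function.Injective f := by
    intro K1 K2 he
    have := cmk_mono G hYW (hrep K1).1 (hrep K2).1 he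
    rcases (mem_compFin G).1 (hrep K1).2 with ⟨h1, e1⟩
    rcases (mem_compFin G).1 (hrep K2).2 with ⟨h2, e2⟩
    rw [← e1, ← e2]
    exact this
  exact Nat.card_le_card_of_injective f hinj

lemma ncomp_le_one_of_subsingleton {W : Finset V} (h : W.card ≤ 1) : ncomp G W ≤ 1 := by
  have hsub : Subsingleton (W : Set V) := by
    rw [Finset.card_le_one] at h
    constructor
    rintro ⟨a, ha⟩ ⟨b, hb⟩
    exact Subtype.ext (h a ha b hb)
  have hs : Subsingleton ((G.induce (W : Set V)).ConnectedComponent) := by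
    constructor
    intro K L
    obtain ⟨u, rfl⟩ := K.exists_rep
    obtain ⟨v, rfl⟩ := L.exists_rep
    congr 1
    exact Subsingleton.elim u v
  rcases isEmpty_or_nonempty ((G.induce (W : Set V)).ConnectedComponent) with he | hne
  · rw [ncomp, Nat.card_of_isEmpty]; omega
  · haveI : Unique ((G.induce (W : Set V)).ConnectedComponent) :=
      ⟨⟨Classical.choice hne⟩, fun a => Subsingleton.elim a _⟩
    rw [ncomp, Nat.card_unique]

lemma ncomp_eq_one_of_connected {W : Finset V} (h : (G.induce (W : Set V)).Connected) :
    ncomp G W = 1 := by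
  rw [ncomp, Nat.card_eq_one_iff_unique]
  constructor
  · constructor
    intro K L
    obtain ⟨u, rfl⟩ := K.exists_rep
    obtain ⟨v, rfl⟩ := L.exists_rep
    exact SimpleGraph.ConnectedComponent.sound (h.preconnected u v)
  · exact ⟨(G.induce (W : Set V)).connectedComponentMk (Classical.choice h.nonempty)⟩

lemma subset_compFin {B W : Finset V} (hBW : B ⊆ W) (hne : B.Nonempty)
    (hB : B.card = 1 ∨ (G.induce (B : Set V)).Connected) :
    ∃ K, B ⊆ compFin G W K := by
  obtain ⟨v0, hv0⟩ := hne
  refine ⟨cmk G W v0 (hBW hv0), fun u hu => (mem_compFin G).2 ⟨hBW hu, ?_⟩⟩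
  rcases hB with h1 | hconn
  · have : u = v0 := by
      rw [Finset.card_eq_one] at h1
      obtain ⟨a, rfl⟩ := h1
      simp only [Finset.mem_singleton] at hu hv0; rw [hu, hv0]
    subst this; rfl
  · have hr : (G.induce (B : Set V)).Reachable ⟨u, hu⟩ ⟨v0, hv0⟩ := hconn.preconnected _ _
    have hsub : (B : Set V) ⊆ (W : Set V) := by exact_mod_cast hBW
    have := hr.map (G.induceHomOfLE hsub).toHom
    exact (SimpleGraph.ConnectedComponent.eq).2 this

lemma sum_compFin_card (W : Finset V) [Fintype ((G.induce (W : Set V)).ConnectedComponent)] :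
    ∑ K : (G.induce (W : Set V)).ConnectedComponent, (compFin G W K).card = W.card := by
  classical
  have hcard : W.card = Fintype.card (W : Set V) := by
    simp [Fintype.card_coe]
  rw [hcard, ← Finset.card_univ]
  rw [Finset.card_eq_sum_card_fiberwise
    (f := fun v : (W : Set V) => (G.induce (W : Set V)).connectedComponentMk v)
    (t := Finset.univ) (fun x _ => mem_univ _)]
  refine Finset.sum_congr rfl fun K _ => ?_
  have he : compFin G W K =
      (Finset.univ.filter fun v : (W : Set V) =>
        (G.induce (W : Set V)).connectedComponentMk v = K).image (Subtype.val) := by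
    ext v
    simp only [mem_image, mem_filter, mem_univ, true_and, mem_compFin]
    constructor
    · rintro ⟨h, hk⟩; exact ⟨⟨v, h⟩, hk, rfl⟩
    · rintro ⟨⟨w, hw⟩, hk, rfl⟩; exact ⟨hw, hk⟩
  rw [he, Finset.card_image_of_injective _ Subtype.val_injective]

lemma gauss (R : ℕ) : 2 * ∑ j ∈ Icc 1 R, j = R * (R + 1) := by
  induction R with
  | zero => simp
  | succ R ih =>
    rw [Finset.sum_Icc_succ_top (by omega)]
    calc 2 * (∑ j ∈ Icc 1 R, j + (R + 1)) = 2 * ∑ j ∈ Icc 1 R, j + 2 * (R + 1) := by ring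
      _ = R * (R + 1) + 2 * (R + 1) := by rw [ih]
      _ = (R + 1) * (R + 1 + 1) := by ring

lemma quad5 (R : ℕ) : 5 * R ≤ R * R + 6 := by
  rcases Nat.lt_or_ge R 5 with h | h
  · interval_cases R <;> omega
  · have : 5 * R ≤ R * R := Nat.mul_le_mul_right R h
    omega

lemma quad3 (R : ℕ) : 3 * R ≤ R * R + 2 := by
  rcases Nat.lt_or_ge R 3 with h | h
  · interval_cases R <;> omega
  · have : 3 * R ≤ R * R := Nat.mul_le_mul_right R h
    omega


lemma key (n : ℕ) : ∀ (A S : Finset V), A.card ≤ n → G.IsRP A → S ⊆ A →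
    2 ≤ ncomp G (A \ S) → ncomp G (A \ S) ≤ 3 * S.card := by
  induction n with
  | zero =>
    intro A S hAn _ _ hc
    have h1 : (A \ S).card ≤ 1 := le_trans (card_le_card sdiff_subset) (by omega)
    have := ncomp_le_one_of_subsingleton G h1
    omega
  | succ n ih =>
    intro A S hAn hG hSA hc
    have hPS : ∀ P : Finset V, P \ (S ∩ P) = P \ S := by
      intro P; ext v; simp only [mem_sdiff, mem_inter]; tauto
    by_cases hA1 : A.card ≤ 1
    · have h1 : (A \ S).card ≤ 1 := le_trans (card_le_card sdiff_subset) hA1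
      have := ncomp_le_one_of_subsingleton G h1
      omega
    push_neg at hA1
    rw [SimpleGraph.IsRP] at hG
    rcases hG with hcard1 | ⟨hconn, hpart⟩
    · omega
    have hs1 : 1 ≤ S.card := by
      rcases Nat.eq_zero_or_pos S.card with h0 | h
      · exfalso
        have hS0 : S = ∅ := card_eq_zero.1 h0
        rw [hS0, sdiff_empty] at hc
        rw [ncomp_eq_one_of_connected G hconn] at hc
        omega
      · exact h
    set W : Finset V := A \ S with hWdef
    have hWA : W ⊆ A := sdiff_subset
    have hWcard : W.card + S.card = A.card := card_sdiff_add_card_eq_card hSA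
    letI : Fintype ((G.induce (W : Set V)).ConnectedComponent) := Fintype.ofFinite _
    have hcfin : ncomp G W = Fintype.card ((G.induce (W : Set V)).ConnectedComponent) :=
      Nat.card_eq_fintype_card
    set sz : (G.induce (W : Set V)).ConnectedComponent → ℕ :=
      fun K => (compFin G W K).card with hszdef
    have hKne : Nonempty ((G.induce (W : Set V)).ConnectedComponent) := by
      rcases isEmpty_or_nonempty ((G.induce (W : Set V)).ConnectedComponent) with he | hne
      · exfalso; rw [ncomp, Nat.card_of_isEmpty] at hc; omega
      · exact hne
    obtain ⟨K0, -, hK0⟩ := Finset.exists_mem_eq_sup (univ) univ_nonempty sz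
    set M : ℕ := univ.sup sz with hMdef
    have hszle : ∀ K, sz K ≤ M := fun K => le_sup (mem_univ K)
    have hsz1 : ∀ K, 1 ≤ sz K := fun K => card_pos.2 (compFin_nonempty G K)
    have hM1 : 1 ≤ M := le_trans (hsz1 K0) (le_of_eq hK0.symm)
    have hMW : M ≤ W.card := by rw [hK0]; exact card_le_card (compFin_subset G)
    set R : ℕ := A.card - M - 1 with hRdef
    have hAMR : A.card = M + R + 1 := by omega
    have htotal : ∑ K, sz K = W.card := sum_compFin_card G W
    have hcc : 2 ≤ Fintype.card ((G.induce (W : Set V)).ConnectedComponent) := by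
      rw [← hcfin]; exact hc
    by_cases hleft : ∀ j ∈ Icc 1 R, ∃ K, sz K = j
    · -- leftover arithmetic case
      classical
      set ψ : {j // j ∈ Icc 1 R} → (G.induce (W : Set V)).ConnectedComponent :=
        fun j => (hleft j.1 j.2).choose with hψdef
      have hψ : ∀ j, sz (ψ j) = j.1 := fun j => (hleft j.1 j.2).choose_spec
      have hinjψ : Set.InjOn ψ ((Icc 1 R).attach) := by
        intro a _ b _ h
        have : (a : ℕ) = (b : ℕ) := by rw [← hψ a, ← hψ b, h]
        exact Subtype.ext this
      set T : Finset ((G.induce (W : Set V)).ConnectedComponent) :=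
        (Icc 1 R).attach.image ψ with hTdef
      have hTsum : ∑ K ∈ T, sz K = ∑ j ∈ Icc 1 R, j := by
        rw [hTdef, Finset.sum_image (fun a ha b hb h => hinjψ ha hb h)]
        rw [← Finset.sum_attach (Icc 1 R) (fun j => j)]
        exact Finset.sum_congr rfl fun j _ => hψ j
      have hTcard : T.card = R := by
        rw [hTdef, Finset.card_image_of_injOn hinjψ, card_attach, Nat.card_Icc]
        omega
      have hgauss' : 2 * ∑ j ∈ Icc 1 R, j = R * R + R := by rw [gauss R]; ring
      have hQ5 := quad5 R
      have hQ3 := quad3 R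
      rw [hcfin]
      rcases le_or_gt M R with hMR | hMR
      · -- M ≤ R
        have hsd : (univ \ T).card + T.card = univ.card :=
          card_sdiff_add_card_eq_card (subset_univ T)
        have hsum_split : ∑ K ∈ univ \ T, sz K + ∑ K ∈ T, sz K = ∑ K ∈ univ, sz K :=
          Finset.sum_sdiff (subset_univ T)
        have hrest : (univ \ T).card ≤ ∑ K ∈ univ \ T, sz K := by
          have := Finset.card_nsmul_le_sum (univ \ T) sz 1 (fun x _ => hsz1 x)
          simpa using this
        have hucard : (univ : Finset ((G.induce (W : Set V)).ConnectedComponent)).card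
            = Fintype.card ((G.induce (W : Set V)).ConnectedComponent) := card_univ
        generalize hQQ : R * R = Q at hgauss' hQ5 hQ3
        omega
      · -- M ≥ R + 1
        have hK0T : K0 ∉ T := by
          intro hmem
          rw [hTdef] at hmem
          obtain ⟨j, -, hj⟩ := Finset.mem_image.1 hmem
          have hsK0 := hψ j
          rw [hj] at hsK0
          have hjR : (j : ℕ) ≤ R := (mem_Icc.1 j.2).2
          omega
        have hsd : (univ \ insert K0 T).card + (insert K0 T).card = univ.card :=
          card_sdiff_add_card_eq_card (subset_univ _)
        have hT'card : (insert K0 T).card = R + 1 := by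
          rw [card_insert_of_notMem hK0T, hTcard]
        have hT'sum : ∑ K ∈ insert K0 T, sz K = sz K0 + ∑ K ∈ T, sz K :=
          Finset.sum_insert hK0T
        have hsum_split : ∑ K ∈ univ \ insert K0 T, sz K + ∑ K ∈ insert K0 T, sz K
            = ∑ K ∈ univ, sz K := Finset.sum_sdiff (subset_univ _)
        have hrest : (univ \ insert K0 T).card ≤ ∑ K ∈ univ \ insert K0 T, sz K := by
          have := Finset.card_nsmul_le_sum (univ \ insert K0 T) sz 1 (fun x _ => hsz1 x)
          simpa using this
        have hucard : (univ : Finset ((G.induce (W : Set V)).ConnectedComponent)).card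
            = Fintype.card ((G.induce (W : Set V)).ConnectedComponent) := card_univ
        generalize hQQ : R * R = Q at hgauss' hQ5 hQ3
        omega
    · -- main case : a good part size k exists
      push_neg at hleft
      obtain ⟨k, hkIcc, hkD⟩ := hleft
      have hk1 : 1 ≤ k := (mem_Icc.1 hkIcc).1
      have hkR : k ≤ R := (mem_Icc.1 hkIcc).2
      have hkA : k + 2 ≤ A.card := by omega
      obtain ⟨P, hmap, hdisj, hfold, hrp⟩ := hpart [k, A.card - k]
        (by intro a ha
            simp only [List.mem_cons, List.not_mem_nil, or_false] at ha
            rcases ha with rfl | rfl <;> omega)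
        (by simp)
        (by simp only [List.sum_cons, List.sum_nil]; omega)
      rcases P with _ | ⟨B, P1⟩
      · simp at hmap
      rcases P1 with _ | ⟨A', P2⟩
      · simp at hmap
      rcases P2 with _ | ⟨C, P3⟩
      swap
      · simp at hmap
      simp only [List.map_cons, List.map_nil, List.cons.injEq, and_true] at hmap
      obtain ⟨hBk, hA'k⟩ := hmap
      simp only [List.foldr_cons, List.foldr_nil, union_empty] at hfold
      have hBA' : Disjoint B A' := by
        rcases hdisj with _ | ⟨hd, _⟩
        exact hd A' (by simp)
      have hrpB : G.IsRP B := hrp B (by simp) (by omega)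
      have hrpA' : G.IsRP A' := hrp A' (by simp) (by omega)
      have hSsub : S ⊆ B ∪ A' := by rw [hfold]; exact hSA
      have hSBA : (S ∩ B) ∪ (S ∩ A') = S := by
        rw [← Finset.inter_union_distrib_left]
        exact inter_eq_left.2 hSsub
      have hSdisj : Disjoint (S ∩ B) (S ∩ A') :=
        hBA'.mono inter_subset_right inter_subset_right
      have hScard : (S ∩ B).card + (S ∩ A').card = S.card := by
        rw [← card_union_of_disjoint hSdisj, hSBA]
      have hWXY : W = (B \ S) ∪ (A' \ S) := by
        rw [hWdef, ← hfold, union_sdiff_distrib]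
      have partBound : ∀ P : Finset V, P.card ≤ n → G.IsRP P → 1 ≤ (S ∩ P).card →
          ncomp G (P \ S) ≤ 3 * (S ∩ P).card := by
        intro P hPn hPRP hbP
        rcases Nat.lt_or_ge (ncomp G (P \ S)) 2 with h | h
        · omega
        · have := ih P (S ∩ P) hPn hPRP inter_subset_right (by rw [hPS P]; exact h)
          rw [hPS P] at this; exact this
      by_cases hSB0 : S ∩ B = ∅
      · -- part B misses S entirely
        have hdisjBS : Disjoint B S := by
          rw [Finset.inter_comm] at hSB0
          exact Finset.disjoint_iff_inter_eq_empty.2 hSB0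
        have hXB : B \ S = B := sdiff_eq_self_of_disjoint hdisjBS
        have hBW : B ⊆ W := by
          intro v hv
          rw [hWdef, mem_sdiff]
          exact ⟨by rw [← hfold]; exact mem_union_left _ hv,
            fun hvS => (Finset.disjoint_left.1 hdisjBS) hv hvS⟩
        have hBne : B.Nonempty := card_pos.1 (by omega)
        have hBC : B.card = 1 ∨ (G.induce (B : Set V)).Connected := by
          rw [SimpleGraph.IsRP] at hrpB
          rcases hrpB with h | ⟨h, _⟩
          · exact Or.inl h
          · exact Or.inr h
        obtain ⟨K, hBK⟩ := subset_compFin G hBW hBne hBC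
        have hneq : B ≠ compFin G W K := by
          intro he
          exact hkD K (by show (compFin G W K).card = k; rw [← he]; exact hBk)
        obtain ⟨w, hwK, hwB⟩ := exists_of_ssubset (ssubset_of_subset_of_ne hBK hneq)
        have hwW : w ∈ W := compFin_subset G hwK
        have hwY : w ∈ A' \ S := by
          have hw2 := hwW
          rw [hWXY] at hw2
          rcases mem_union.1 hw2 with h | h
          · rw [hXB] at h; exact absurd h hwB
          · exact h
        have hmeet : ∀ J, ∃ y, y ∈ A' \ S ∧ y ∈ compFin G W J := by
          intro J
          obtain ⟨v, hv⟩ := compFin_nonempty G J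
          by_cases hvY : v ∈ A' \ S
          · exact ⟨v, hvY, hv⟩
          · have hvW : v ∈ W := compFin_subset G hv
            have hvB : v ∈ B := by
              rw [hWXY] at hvW
              rcases mem_union.1 hvW with h | h
              · rwa [hXB] at h
              · exact absurd h hvY
            have hJK : J = K := compFin_eq_of_mem G hv (hBK hvB)
            rw [hJK]
            exact ⟨w, hwY, hwK⟩
        have h1 : ncomp G W ≤ ncomp G (A' \ S) :=
          ncomp_le_of_meets G (by rw [hWXY]; exact subset_union_right) hmeet
        have hA'n : A'.card ≤ n := by omega
        have h2 : 2 ≤ ncomp G (A' \ S) := le_trans hc h1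
        have h3 := ih A' (S ∩ A') hA'n hrpA' inter_subset_right (by rw [hPS A']; exact h2)
        rw [hPS A'] at h3
        have h4 : (S ∩ A').card ≤ S.card := card_le_card inter_subset_left
        omega
      · by_cases hSA0 : S ∩ A' = ∅
        · -- part A' misses S entirely : impossible
          exfalso
          have hdisjAS : Disjoint A' S := by
            rw [Finset.inter_comm] at hSA0
            exact Finset.disjoint_iff_inter_eq_empty.2 hSA0
          have hA'W : A' ⊆ W := by
            intro v hv
            rw [hWdef, mem_sdiff]
            exact ⟨by rw [← hfold]; exact mem_union_right _ hv,
              fun hvS => (Finset.disjoint_left.1 hdisjAS) hv hvS⟩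
          have hA'card2 : 2 ≤ A'.card := by omega
          have hA'conn : (G.induce (A' : Set V)).Connected := by
            rw [SimpleGraph.IsRP] at hrpA'
            rcases hrpA' with h | ⟨h, _⟩
            · omega
            · exact h
          obtain ⟨K, hK⟩ := subset_compFin G hA'W (card_pos.1 (by omega)) (Or.inr hA'conn)
          have hle1 : A'.card ≤ sz K := card_le_card hK
          have hle2 : sz K ≤ M := hszle K
          omega
        · -- both parts meet S
          have hbB : 1 ≤ (S ∩ B).card := card_pos.2 (nonempty_iff_ne_empty.2 hSB0)
          have hbA : 1 ≤ (S ∩ A').card := card_pos.2 (nonempty_iff_ne_empty.2 hSA0)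
          have hu : ncomp G W ≤ ncomp G (B \ S) + ncomp G (A' \ S) := by
            rw [hWXY]; exact ncomp_union_le G _ _
          have e1 := partBound B (by omega) hrpB hbB
          have e2 := partBound A' (by omega) hrpA' hbA
          omega

end RPaux

/-- Every recursively partitionable graph is `1/3`-tough: for every vertex subset `S` with
`c(G − S) ≥ 2` one has `|S| ≥ c(G − S) / 3`. -/
theorem isRP_one_third_tough {V : Type} [Fintype V] [DecidableEq V]
    (G : SimpleGraph V) (hG : G.IsRP Finset.univ) (S : Finset V)
    (hc : 2 ≤ Nat.card (G.induce ((↑S : Set V)ᶜ)).ConnectedComponent) :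
    ((Nat.card (G.induce ((↑S : Set V)ᶜ)).ConnectedComponent : ℚ)) / 3 ≤ (S.card : ℚ) := by
  classical
  have hset : ((Finset.univ \ S : Finset V) : Set V) = ((↑S : Set V)ᶜ) := by
    rw [Finset.coe_sdiff, Finset.coe_univ, Set.compl_eq_univ_diff]
  have hEq : RPaux.ncomp G (Finset.univ \ S)
      = Nat.card (G.induce ((↑S : Set V)ᶜ)).ConnectedComponent := by
    unfold RPaux.ncomp
    rw [hset]
  have h2 : 2 ≤ RPaux.ncomp G (Finset.univ \ S) := by rw [hEq]; exact hc
  have hkey := RPaux.key G (Fintype.card V) Finset.univ S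
    (le_of_eq (Finset.card_univ)) hG (Finset.subset_univ S) h2
  rw [hEq] at hkey
  rw [div_le_iff₀ (by norm_num : (0:ℚ) < 3)]
  exact_mod_cast (by omega :
    Nat.card (G.induce ((↑S : Set V)ᶜ)).ConnectedComponent ≤ S.card * 3)
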